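/- Let κ > 0 and n ∈ ℕ. Let h₀, h₁ : (0,∞) → ℂ be twice differentiable functions satisfying h₀'(r) = −h₁(r) and h₁'(r) = h₀(r) − h₁(r)/r for all r > 0, and let F, G : ℝ → ℂ be twice differentiable and 2π-periodic. Identify ℝ² with ℂ and define ψ on ℂ ∖ {0} by ψ(z) = ( h₀(κ|z|) F(arg z) + h₁(κ|z|) G(arg z) ) |z|^{−n}. Then for every z ≠ 0, writing r = |z| and φ = arg z: Δψ(z) + κ²ψ(z) = 2nκ ( h₁(κr) F(φ) − h₀(κr) G(φ) ) r^{−n−1} + ( h₀(κr) ( F''(φ) + n² F(φ) ) + h₁(κr) ( G''(φ) + (n+1)² G(φ) ) ) r^{−n−2}, where Δ denotes the Laplacian on ℝ² ≅ ℂ and ' denotes differentiation of F, G with respect to φ. -/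

import Mathlib

open Complex

noncomputable section

/-- The Laplacian of `ψ : ℂ → ℂ` at `z`, viewing `ℂ ≅ ℝ²` as a real vector space: the sum of
the second derivatives in the directions `1` and `i`. -/
def lapC (ψ : ℂ → ℂ) (z : ℂ) : ℂ :=
  fderiv ℝ (fun w => fderiv ℝ ψ w 1) z 1 +
    fderiv ℝ (fun w => fderiv ℝ ψ w Complex.I) z Complex.I

/-! ### Auxiliary machinery -/

/-- The real-linear map `v ↦ v.re • a + v.im • b` on `ℂ`. -/
def pd (a b : ℂ) : ℂ →L[ℝ] ℂ :=
  (Complex.reCLM.smulRight a) + (Complex.imCLM.smulRight b)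

@[simp] lemma pd_apply (a b : ℂ) (v : ℂ) : pd a b v = v.re • a + v.im • b := rfl

lemma pd_add (a b c d : ℂ) : pd a b + pd c d = pd (a + c) (b + d) := by
  ext v
  simp [pd]
  module

lemma hasFDerivAt_sep {P F : ℝ → ℂ} {p f : ℂ} {s : ℂ}
    (hP : HasDerivAt P p s.re) (hF : HasDerivAt F f s.im) :
    HasFDerivAt (fun w : ℂ => P w.re * F w.im) (pd (p * F s.im) (P s.re * f)) s := by
  have h1 : HasFDerivAt (fun w : ℂ => P w.re) (Complex.reCLM.smulRight p) s := by
    refine (hP.hasFDerivAt.comp s Complex.reCLM.hasFDerivAt).congr_fderiv ?_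
    ext v; simp
  have h2 : HasFDerivAt (fun w : ℂ => F w.im) (Complex.imCLM.smulRight f) s := by
    refine (hF.hasFDerivAt.comp s Complex.imCLM.hasFDerivAt).congr_fderiv ?_
    ext v; simp
  have h3 : HasFDerivAt (fun w : ℂ => P w.re * F w.im) _ s := h1.mul h2
  convert h3 using 1
  ext v
  simp [pd, Complex.real_smul]
  ring

def kE (n : ℕ) (x : ℝ) : ℂ := Complex.exp (-(n:ℂ) * x)

lemma kE_def (n : ℕ) : kE n = fun x : ℝ => Complex.exp (-(n:ℂ) * x) := rfl

lemma hasDerivAt_kE (n : ℕ) (x : ℝ) : HasDerivAt (kE n) (-(n:ℂ) * kE n x) x := by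
  have h : HasDerivAt (fun y : ℂ => Complex.exp (-(n:ℂ) * y))
      (Complex.exp (-(n:ℂ) * (x:ℂ)) * (-(n:ℂ) * 1)) (x:ℂ) :=
    ((hasDerivAt_id ((x:ℝ):ℂ)).const_mul (-(n:ℂ))).cexp
  rw [kE_def]
  have h2 := h.comp_ofReal
  simpa [mul_comm] using h2

lemma kE_log {n : ℕ} {r : ℝ} (hr : 0 < r) : kE n (Real.log r) = (((r:ℂ)) ^ n)⁻¹ := by
  rw [kE_def]
  have h1 : ((Real.log r : ℝ) : ℂ) = Complex.log (r : ℂ) := Complex.ofReal_log hr.le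
  have hrne : (r : ℂ) ≠ 0 := by exact_mod_cast hr.ne'
  simp only [h1]
  have h2 : -(n:ℂ) * Complex.log (r:ℂ) = (n:ℕ) * (-Complex.log (r:ℂ)) := by ring
  rw [h2, Complex.exp_nat_mul, Complex.exp_neg, Complex.exp_log hrne, inv_pow]

/-! ### One-dimensional radial derivatives -/

lemma hasDerivAt_P {κ : ℝ} (hκ : 0 < κ) (n : ℕ) {h₀ h₁ : ℝ → ℂ}
    (hd₀ : ∀ r : ℝ, 0 < r → HasDerivAt h₀ (-(h₁ r)) r) (x : ℝ) :
    HasDerivAt (fun x => h₀ (κ * Real.exp x) * kE n x)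
      ((-(↑(κ * Real.exp x)) * h₁ (κ * Real.exp x) - (n:ℂ) * h₀ (κ * Real.exp x)) * kE n x) x := by
  have hpos : 0 < κ * Real.exp x := mul_pos hκ (Real.exp_pos x)
  have hte : HasDerivAt (fun x => κ * Real.exp x) (κ * Real.exp x) x :=
    (Real.hasDerivAt_exp x).const_mul κ
  have h0t : HasDerivAt (fun x => h₀ (κ * Real.exp x))
      ((κ * Real.exp x) • (-(h₁ (κ * Real.exp x)))) x :=
    (hd₀ _ hpos).scomp x hte
  have h : HasDerivAt (fun x => h₀ (κ * Real.exp x) * kE n x) _ x := h0t.mul (hasDerivAt_kE n x)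
  convert h using 1
  simp only [Complex.real_smul, smul_eq_mul]
  ring

lemma hasDerivAt_Q {κ : ℝ} (hκ : 0 < κ) (n : ℕ) {h₀ h₁ : ℝ → ℂ}
    (hd₁ : ∀ r : ℝ, 0 < r → HasDerivAt h₁ (h₀ r - h₁ r / r) r) (x : ℝ) :
    HasDerivAt (fun x => h₁ (κ * Real.exp x) * kE n x)
      ((↑(κ * Real.exp x) * h₀ (κ * Real.exp x) - (1 + (n:ℂ)) * h₁ (κ * Real.exp x)) * kE n x) x := by
  have hpos : 0 < κ * Real.exp x := mul_pos hκ (Real.exp_pos x)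
  have hte : HasDerivAt (fun x => κ * Real.exp x) (κ * Real.exp x) x :=
    (Real.hasDerivAt_exp x).const_mul κ
  have h1t : HasDerivAt (fun x => h₁ (κ * Real.exp x))
      ((κ * Real.exp x) • (h₀ (κ * Real.exp x) - h₁ (κ * Real.exp x) / ((κ * Real.exp x : ℝ) : ℂ))) x :=
    (hd₁ _ hpos).scomp x hte
  have h : HasDerivAt (fun x => h₁ (κ * Real.exp x) * kE n x) _ x := h1t.mul (hasDerivAt_kE n x)
  convert h using 1
  have hκ0 : (κ : ℂ) ≠ 0 := by exact_mod_cast (ne_of_gt hκ)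
  simp only [Complex.real_smul, smul_eq_mul, Complex.ofReal_mul, Complex.ofReal_exp]
  field_simp [Complex.exp_ne_zero]
  ring

lemma hasDerivAt_P₁ {κ : ℝ} (hκ : 0 < κ) (n : ℕ) {h₀ h₁ : ℝ → ℂ}
    (hd₀ : ∀ r : ℝ, 0 < r → HasDerivAt h₀ (-(h₁ r)) r)
    (hd₁ : ∀ r : ℝ, 0 < r → HasDerivAt h₁ (h₀ r - h₁ r / r) r) (x : ℝ) :
    HasDerivAt (fun x => (-(↑(κ * Real.exp x)) * h₁ (κ * Real.exp x)
        - (n:ℂ) * h₀ (κ * Real.exp x)) * kE n x)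
      ((-(↑(κ * Real.exp x))^2 * h₀ (κ * Real.exp x)
        + 2*(n:ℂ)*(↑(κ * Real.exp x)) * h₁ (κ * Real.exp x)
        + (n:ℂ)^2 * h₀ (κ * Real.exp x)) * kE n x) x := by
  have hpos : 0 < κ * Real.exp x := mul_pos hκ (Real.exp_pos x)
  have hte : HasDerivAt (fun x => κ * Real.exp x) (κ * Real.exp x) x :=
    (Real.hasDerivAt_exp x).const_mul κ
  have htc : HasDerivAt (fun x => ((κ * Real.exp x : ℝ) : ℂ)) ↑(κ * Real.exp x) x :=
    hte.ofReal_comp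
  have h0t : HasDerivAt (fun x => h₀ (κ * Real.exp x))
      ((κ * Real.exp x) • (-(h₁ (κ * Real.exp x)))) x :=
    (hd₀ _ hpos).scomp x hte
  have h1t : HasDerivAt (fun x => h₁ (κ * Real.exp x))
      ((κ * Real.exp x) • (h₀ (κ * Real.exp x) - h₁ (κ * Real.exp x) / ((κ * Real.exp x : ℝ) : ℂ))) x :=
    (hd₁ _ hpos).scomp x hte
  have hinner : HasDerivAt (fun x => -(↑(κ * Real.exp x)) * h₁ (κ * Real.exp x)
      - (n:ℂ) * h₀ (κ * Real.exp x)) _ x := ((htc.neg).mul h1t).sub (h0t.const_mul (n:ℂ))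
  have h : HasDerivAt (fun x => _ * kE n x) _ x := hinner.mul (hasDerivAt_kE n x)
  convert h using 1
  have hκ0 : (κ : ℂ) ≠ 0 := by exact_mod_cast (ne_of_gt hκ)
  simp only [Complex.real_smul, smul_eq_mul, Complex.ofReal_mul, Complex.ofReal_exp, Pi.neg_apply]
  field_simp [Complex.exp_ne_zero]
  ring

lemma hasDerivAt_Q₁ {κ : ℝ} (hκ : 0 < κ) (n : ℕ) {h₀ h₁ : ℝ → ℂ}
    (hd₀ : ∀ r : ℝ, 0 < r → HasDerivAt h₀ (-(h₁ r)) r)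
    (hd₁ : ∀ r : ℝ, 0 < r → HasDerivAt h₁ (h₀ r - h₁ r / r) r) (x : ℝ) :
    HasDerivAt (fun x => (↑(κ * Real.exp x) * h₀ (κ * Real.exp x)
        - (1 + (n:ℂ)) * h₁ (κ * Real.exp x)) * kE n x)
      ((-(↑(κ * Real.exp x))^2 * h₁ (κ * Real.exp x)
        - 2*(n:ℂ)*(↑(κ * Real.exp x)) * h₀ (κ * Real.exp x)
        + (1 + (n:ℂ))^2 * h₁ (κ * Real.exp x)) * kE n x) x := by
  have hpos : 0 < κ * Real.exp x := mul_pos hκ (Real.exp_pos x)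
  have hte : HasDerivAt (fun x => κ * Real.exp x) (κ * Real.exp x) x :=
    (Real.hasDerivAt_exp x).const_mul κ
  have htc : HasDerivAt (fun x => ((κ * Real.exp x : ℝ) : ℂ)) ↑(κ * Real.exp x) x :=
    hte.ofReal_comp
  have h0t : HasDerivAt (fun x => h₀ (κ * Real.exp x))
      ((κ * Real.exp x) • (-(h₁ (κ * Real.exp x)))) x :=
    (hd₀ _ hpos).scomp x hte
  have h1t : HasDerivAt (fun x => h₁ (κ * Real.exp x))
      ((κ * Real.exp x) • (h₀ (κ * Real.exp x) - h₁ (κ * Real.exp x) / ((κ * Real.exp x : ℝ) : ℂ))) x :=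
    (hd₁ _ hpos).scomp x hte
  have hinner : HasDerivAt (fun x => ↑(κ * Real.exp x) * h₀ (κ * Real.exp x)
      - (1 + (n:ℂ)) * h₁ (κ * Real.exp x)) _ x := (htc.mul h0t).sub (h1t.const_mul (1 + (n:ℂ)))
  have h : HasDerivAt (fun x => _ * kE n x) _ x := hinner.mul (hasDerivAt_kE n x)
  convert h using 1
  have hκ0 : (κ : ℂ) ≠ 0 := by exact_mod_cast (ne_of_gt hκ)
  simp only [Complex.real_smul, smul_eq_mul, Complex.ofReal_mul, Complex.ofReal_exp]
  field_simp [Complex.exp_ne_zero]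
  ring

/-! ### The function on logarithmic coordinates and its partial derivatives -/

def PhiF (κ : ℝ) (n : ℕ) (h₀ h₁ F G : ℝ → ℂ) : ℂ → ℂ := fun s =>
  h₀ (κ * Real.exp s.re) * kE n s.re * F s.im + h₁ (κ * Real.exp s.re) * kE n s.re * G s.im

def PhiX (κ : ℝ) (n : ℕ) (h₀ h₁ F G : ℝ → ℂ) : ℂ → ℂ := fun s =>
  (-(↑(κ * Real.exp s.re)) * h₁ (κ * Real.exp s.re) - (n:ℂ) * h₀ (κ * Real.exp s.re)) * kE n s.re * F s.im
  + (↑(κ * Real.exp s.re) * h₀ (κ * Real.exp s.re) - (1 + (n:ℂ)) * h₁ (κ * Real.exp s.re)) * kE n s.re * G s.im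

def PhiXX (κ : ℝ) (n : ℕ) (h₀ h₁ F G : ℝ → ℂ) : ℂ → ℂ := fun s =>
  (-(↑(κ * Real.exp s.re))^2 * h₀ (κ * Real.exp s.re)
        + 2*(n:ℂ)*(↑(κ * Real.exp s.re)) * h₁ (κ * Real.exp s.re)
        + (n:ℂ)^2 * h₀ (κ * Real.exp s.re)) * kE n s.re * F s.im
  + (-(↑(κ * Real.exp s.re))^2 * h₁ (κ * Real.exp s.re)
        - 2*(n:ℂ)*(↑(κ * Real.exp s.re)) * h₀ (κ * Real.exp s.re)
        + (1 + (n:ℂ))^2 * h₁ (κ * Real.exp s.re)) * kE n s.re * G s.im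

lemma hasFDerivAt_PhiF {κ : ℝ} (hκ : 0 < κ) (n : ℕ) {h₀ h₁ : ℝ → ℂ}
    (hd₀ : ∀ r : ℝ, 0 < r → HasDerivAt h₀ (-(h₁ r)) r)
    (hd₁ : ∀ r : ℝ, 0 < r → HasDerivAt h₁ (h₀ r - h₁ r / r) r)
    {F G : ℝ → ℂ} (hF : Differentiable ℝ F) (hG : Differentiable ℝ G) (s : ℂ) :
    HasFDerivAt (PhiF κ n h₀ h₁ F G)
      (pd (PhiX κ n h₀ h₁ F G s) (PhiF κ n h₀ h₁ (deriv F) (deriv G) s)) s := by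
  have h1 := hasFDerivAt_sep (hasDerivAt_P hκ n hd₀ s.re) (hF s.im).hasDerivAt
  have h2 := hasFDerivAt_sep (hasDerivAt_Q hκ n hd₁ s.re) (hG s.im).hasDerivAt
  have h3 := h1.add h2
  rw [pd_add] at h3
  exact h3

lemma hasFDerivAt_PhiX {κ : ℝ} (hκ : 0 < κ) (n : ℕ) {h₀ h₁ : ℝ → ℂ}
    (hd₀ : ∀ r : ℝ, 0 < r → HasDerivAt h₀ (-(h₁ r)) r)
    (hd₁ : ∀ r : ℝ, 0 < r → HasDerivAt h₁ (h₀ r - h₁ r / r) r)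
    {F G : ℝ → ℂ} (hF : Differentiable ℝ F) (hG : Differentiable ℝ G) (s : ℂ) :
    HasFDerivAt (PhiX κ n h₀ h₁ F G)
      (pd (PhiXX κ n h₀ h₁ F G s) (PhiX κ n h₀ h₁ (deriv F) (deriv G) s)) s := by
  have h1 := hasFDerivAt_sep (hasDerivAt_P₁ hκ n hd₀ hd₁ s.re) (hF s.im).hasDerivAt
  have h2 := hasFDerivAt_sep (hasDerivAt_Q₁ hκ n hd₀ hd₁ s.re) (hG s.im).hasDerivAt
  have h3 := h1.add h2
  rw [pd_add] at h3
  exact h3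

/-! ### The core identity on the slit plane -/

theorem karp_aux
    (κ : ℝ) (hκ : 0 < κ) (n : ℕ)
    (h₀ h₁ : ℝ → ℂ)
    (hd₀ : ∀ r : ℝ, 0 < r → HasDerivAt h₀ (-(h₁ r)) r)
    (hd₁ : ∀ r : ℝ, 0 < r → HasDerivAt h₁ (h₀ r - h₁ r / r) r)
    (F G : ℝ → ℂ)
    (hF : Differentiable ℝ F) (hF' : Differentiable ℝ (deriv F))
    (hG : Differentiable ℝ G) (hG' : Differentiable ℝ (deriv G))
    (ψ : ℂ → ℂ)
    (hψ : ∀ z ∈ Complex.slitPlane, ψ z =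
      (h₀ (κ * ‖z‖) * F (Complex.arg z) + h₁ (κ * ‖z‖) * G (Complex.arg z)) /
        ((‖z‖ : ℂ)) ^ n) :
    ∀ z ∈ Complex.slitPlane,
      lapC ψ z + (κ : ℂ) ^ 2 * ψ z =
        2 * (n : ℂ) * (κ : ℂ) *
            (h₁ (κ * ‖z‖) * F (Complex.arg z) -
              h₀ (κ * ‖z‖) * G (Complex.arg z)) / ((‖z‖ : ℂ)) ^ (n + 1) +
          (h₀ (κ * ‖z‖) *
              (deriv (deriv F) (Complex.arg z) + (n : ℂ) ^ 2 * F (Complex.arg z)) +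
            h₁ (κ * ‖z‖) *
              (deriv (deriv G) (Complex.arg z) + ((n : ℂ) + 1) ^ 2 * G (Complex.arg z))) /
            ((‖z‖ : ℂ)) ^ (n + 2) := by
  intro z hz
  have hz0 : z ≠ 0 := Complex.slitPlane_ne_zero hz
  have habs : 0 < ‖z‖ := norm_pos_iff.mpr hz0
  -- ψ agrees with `PhiF ∘ log` on the slit plane
  have hψΦ : ∀ w ∈ Complex.slitPlane, ψ w = PhiF κ n h₀ h₁ F G (Complex.log w) := by
    intro w hw
    have hw0 : w ≠ 0 := Complex.slitPlane_ne_zero hw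
    have habsw : 0 < ‖w‖ := norm_pos_iff.mpr hw0
    rw [hψ w hw]
    simp only [PhiF, Complex.log_re, Complex.log_im]
    rw [Real.exp_log habsw, kE_log habsw]
    field_simp
  -- the full derivative of ψ on the slit plane
  set Dlog : ℂ → (ℂ →L[ℝ] ℂ) :=
    fun w => ((1 : ℂ →L[ℂ] ℂ).smulRight w⁻¹).restrictScalars ℝ with hDlog
  have hψloc : ∀ w ∈ Complex.slitPlane,
      HasFDerivAt ψ ((pd (PhiX κ n h₀ h₁ F G (Complex.log w))
        (PhiF κ n h₀ h₁ (deriv F) (deriv G) (Complex.log w))).comp (Dlog w)) w := by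
    intro w hw
    have hlog : HasFDerivAt Complex.log (Dlog w) w :=
      (Complex.hasDerivAt_log hw).hasFDerivAt.restrictScalars ℝ
    have hcomp := (hasFDerivAt_PhiF hκ n hd₀ hd₁ hF hG (Complex.log w)).comp w hlog
    refine hcomp.congr_of_eventuallyEq ?_
    filter_upwards [Complex.isOpen_slitPlane.eventually_mem hw] with u hu
    exact hψΦ u hu
  -- the first order derivatives in the two directions, as functions near z
  have e1 : (fun w => fderiv ℝ ψ w 1) =ᶠ[nhds z]
      (fun w => ((((1:ℂ) * w⁻¹).re : ℝ) : ℂ) * PhiX κ n h₀ h₁ F G (Complex.log w)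
        + ((((1:ℂ) * w⁻¹).im : ℝ) : ℂ) * PhiF κ n h₀ h₁ (deriv F) (deriv G) (Complex.log w)) := by
    filter_upwards [Complex.isOpen_slitPlane.eventually_mem hz] with w hw
    rw [(hψloc w hw).fderiv]
    simp [hDlog, pd_apply, Complex.real_smul, smul_eq_mul]
  have eI : (fun w => fderiv ℝ ψ w Complex.I) =ᶠ[nhds z]
      (fun w => (((Complex.I * w⁻¹).re : ℝ) : ℂ) * PhiX κ n h₀ h₁ F G (Complex.log w)
        + (((Complex.I * w⁻¹).im : ℝ) : ℂ) * PhiF κ n h₀ h₁ (deriv F) (deriv G) (Complex.log w)) := by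
    filter_upwards [Complex.isOpen_slitPlane.eventually_mem hz] with w hw
    rw [(hψloc w hw).fderiv]
    simp [hDlog, pd_apply, Complex.real_smul, smul_eq_mul]
  -- second derivatives: the generic directional block
  have hXcomp : HasFDerivAt (fun w => PhiX κ n h₀ h₁ F G (Complex.log w))
      ((pd (PhiXX κ n h₀ h₁ F G (Complex.log z))
        (PhiX κ n h₀ h₁ (deriv F) (deriv G) (Complex.log z))).comp (Dlog z)) z :=
    (hasFDerivAt_PhiX hκ n hd₀ hd₁ hF hG (Complex.log z)).comp z
      ((Complex.hasDerivAt_log hz).hasFDerivAt.restrictScalars ℝ)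
  have hYcomp : HasFDerivAt (fun w => PhiF κ n h₀ h₁ (deriv F) (deriv G) (Complex.log w))
      ((pd (PhiX κ n h₀ h₁ (deriv F) (deriv G) (Complex.log z))
        (PhiF κ n h₀ h₁ (deriv (deriv F)) (deriv (deriv G)) (Complex.log z))).comp (Dlog z)) z :=
    (hasFDerivAt_PhiF hκ n hd₀ hd₁ hF' hG' (Complex.log z)).comp z
      ((Complex.hasDerivAt_log hz).hasFDerivAt.restrictScalars ℝ)
  have hblock : ∀ c : ℂ, HasFDerivAt
      (fun w => (((c * w⁻¹).re : ℝ) : ℂ) * PhiX κ n h₀ h₁ F G (Complex.log w)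
        + (((c * w⁻¹).im : ℝ) : ℂ) * PhiF κ n h₀ h₁ (deriv F) (deriv G) (Complex.log w))
      (((((c * z⁻¹).re : ℝ) : ℂ) • ((pd (PhiXX κ n h₀ h₁ F G (Complex.log z))
            (PhiX κ n h₀ h₁ (deriv F) (deriv G) (Complex.log z))).comp (Dlog z))
        + PhiX κ n h₀ h₁ F G (Complex.log z) • (Complex.ofRealCLM.comp (Complex.reCLM.comp
            (((1 : ℂ →L[ℂ] ℂ).smulRight (c * (-(z ^ 2)⁻¹))).restrictScalars ℝ))))
      + (((((c * z⁻¹).im : ℝ) : ℂ) • ((pd (PhiX κ n h₀ h₁ (deriv F) (deriv G) (Complex.log z))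
            (PhiF κ n h₀ h₁ (deriv (deriv F)) (deriv (deriv G)) (Complex.log z))).comp (Dlog z))
        + PhiF κ n h₀ h₁ (deriv F) (deriv G) (Complex.log z) • (Complex.ofRealCLM.comp (Complex.imCLM.comp
            (((1 : ℂ →L[ℂ] ℂ).smulRight (c * (-(z ^ 2)⁻¹))).restrictScalars ℝ)))))) z := by
    intro c
    have hinv : HasFDerivAt (fun w : ℂ => c * w⁻¹)
        (((1 : ℂ →L[ℂ] ℂ).smulRight (c * (-(z ^ 2)⁻¹))).restrictScalars ℝ) z := by
      have h := ((hasDerivAt_inv hz0).const_mul c).hasFDerivAt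
      exact h.restrictScalars ℝ
    have hre : HasFDerivAt (fun w : ℂ => ((((c * w⁻¹).re : ℝ)) : ℂ))
        (Complex.ofRealCLM.comp (Complex.reCLM.comp
          (((1 : ℂ →L[ℂ] ℂ).smulRight (c * (-(z ^ 2)⁻¹))).restrictScalars ℝ))) z :=
      Complex.ofRealCLM.hasFDerivAt.comp z (Complex.reCLM.hasFDerivAt.comp z hinv)
    have him : HasFDerivAt (fun w : ℂ => ((((c * w⁻¹).im : ℝ)) : ℂ))
        (Complex.ofRealCLM.comp (Complex.imCLM.comp
          (((1 : ℂ →L[ℂ] ℂ).smulRight (c * (-(z ^ 2)⁻¹))).restrictScalars ℝ))) z :=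
      Complex.ofRealCLM.hasFDerivAt.comp z (Complex.imCLM.hasFDerivAt.comp z hinv)
    exact (hre.mul hXcomp).add (him.mul hYcomp)
  -- abbreviations for the second-order partials at log z
  set XX := PhiXX κ n h₀ h₁ F G (Complex.log z) with hXX
  set XY := PhiX κ n h₀ h₁ (deriv F) (deriv G) (Complex.log z) with hXY
  set YY := PhiF κ n h₀ h₁ (deriv (deriv F)) (deriv (deriv G)) (Complex.log z) with hYY
  set X := PhiX κ n h₀ h₁ F G (Complex.log z) with hX
  set Y := PhiF κ n h₀ h₁ (deriv F) (deriv G) (Complex.log z) with hY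
  -- the key Laplacian computation
  have key : lapC ψ z = (((‖z‖ ^ 2)⁻¹ : ℝ) : ℂ) * (XX + YY) := by
    have hpq : (z⁻¹).re ^ 2 + (z⁻¹).im ^ 2 = (‖z‖ ^ 2)⁻¹ := by
      have h1 : Complex.normSq z⁻¹ = (Complex.normSq z)⁻¹ := by
        simp [Complex.normSq_inv]
      have h2 : Complex.normSq z = ‖z‖ ^ 2 := (Complex.sq_norm z).symm
      have h3 : Complex.normSq z⁻¹ = (z⁻¹).re ^ 2 + (z⁻¹).im ^ 2 := by
        rw [Complex.normSq_apply]; ring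
      rw [← h3, h1, h2]
    have hpqC : (((z⁻¹).re : ℝ) : ℂ) ^ 2 + (((z⁻¹).im : ℝ) : ℂ) ^ 2
        = (((‖z‖ ^ 2)⁻¹ : ℝ) : ℂ) := by
      exact_mod_cast congrArg (fun t : ℝ => (t : ℂ)) hpq
    unfold lapC
    rw [e1.fderiv_eq, eI.fderiv_eq, (hblock 1).fderiv, (hblock Complex.I).fderiv]
    simp only [hDlog, one_smul, ContinuousLinearMap.add_apply, ContinuousLinearMap.smul_apply,
      ContinuousLinearMap.coe_comp', Function.comp_apply,
      ContinuousLinearMap.coe_restrictScalars', ContinuousLinearMap.smulRight_apply,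
      ContinuousLinearMap.one_apply, pd_apply, Complex.ofRealCLM_apply, Complex.reCLM_apply,
      Complex.imCLM_apply, smul_eq_mul, Complex.real_smul, one_mul,
      Complex.mul_re, Complex.mul_im, Complex.I_re, Complex.I_im,
      Complex.one_re, Complex.one_im]
    push_cast at hpqC ⊢
    linear_combination (XX + YY) * hpqC
  -- final algebraic assembly
  rw [key, hψ z hz]
  rw [hXX, hYY]
  simp only [PhiXX, PhiF, Complex.log_re, Complex.log_im, Real.exp_log habs, kE_log habs]
  have hrne : ((‖z‖ : ℝ) : ℂ) ≠ 0 := by exact_mod_cast habs.ne'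
  have hppow : ∀ m : ℕ, ((‖z‖ : ℝ) : ℂ) ^ m ≠ 0 := fun m => pow_ne_zero m hrne
  push_cast
  field_simp
  ring

/-! ### Reduction from the slit plane to all of `ℂ ∖ {0}` -/

lemma fderiv_comp_neg (g : ℂ → ℂ) (w v : ℂ) :
    fderiv ℝ (fun u : ℂ => g (-u)) w v = - fderiv ℝ g (-w) v := by
  have h : (fun u : ℂ => g (-u)) = g ∘ (ContinuousLinearEquiv.neg ℝ (M := ℂ)) := rfl
  rw [h, ContinuousLinearEquiv.comp_right_fderiv]
  simp

lemma lapC_comp_neg (f : ℂ → ℂ) (z : ℂ) :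
    lapC (fun w => f (-w)) z = lapC f (-z) := by
  unfold lapC
  have h2 : ∀ v : ℂ, (fun w => fderiv ℝ (fun u : ℂ => f (-u)) w v)
      = fun w => - (fun u => fderiv ℝ f u v) (-w) := by
    intro v; funext w; exact fderiv_comp_neg f w v
  have h3 : ∀ v : ℂ, fderiv ℝ (fun w => fderiv ℝ (fun u : ℂ => f (-u)) w v) z v
      = fderiv ℝ (fun u => fderiv ℝ f u v) (-z) v := by
    intro v
    rw [h2 v, fderiv_fun_neg, ContinuousLinearMap.neg_apply,
      fderiv_comp_neg (fun u => fderiv ℝ f u v) z v, neg_neg]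
  rw [h3 1, h3 Complex.I]

lemma periodic_arg_neg {H : ℝ → ℂ} (hper : Function.Periodic H (2 * Real.pi))
    {w : ℂ} (hw : w ∈ Complex.slitPlane) :
    H (Complex.arg (-w)) = H (Complex.arg w + Real.pi) := by
  rcases lt_trichotomy w.im 0 with h | h | h
  · rw [Complex.arg_neg_eq_arg_add_pi_of_im_neg h]
  · have hre : 0 < w.re := by
      rcases Complex.mem_slitPlane_iff.1 hw with h' | h'
      · exact h'
      · exact absurd h h'
    have h1 : Complex.arg w = 0 := Complex.arg_eq_zero_iff.2 ⟨hre.le, h⟩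
    have h2 : Complex.arg (-w) = Real.pi := by
      refine Complex.arg_eq_pi_iff.2 ⟨?_, ?_⟩
      · simpa using hre
      · simpa using h
    rw [h1, h2, zero_add]
  · rw [Complex.arg_neg_eq_arg_sub_pi_of_im_pos h]
    have hp := hper (Complex.arg w - Real.pi)
    rw [← hp]
    congr 1
    ring

/-! ### Main theorem -/

/-- The term-by-term identity (5.7): applying the Helmholtz operator `Δ + κ²` to one pair of
terms `(h₀(κ|z|) F(arg z) + h₁(κ|z|) G(arg z)) |z|^{−n}` of a Karp-type expansion, where
`h₀' = −h₁` and `h₁'(r) = h₀(r) − h₁(r)/r` (the identities satisfied by the Hankel functions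
`H₀`, `H₁` of the first kind). -/
theorem karp_term_helmholtz_identity
    (κ : ℝ) (hκ : 0 < κ) (n : ℕ)
    (h₀ h₁ : ℝ → ℂ)
    (hd₀ : ∀ r : ℝ, 0 < r → HasDerivAt h₀ (-(h₁ r)) r)
    (hd₁ : ∀ r : ℝ, 0 < r → HasDerivAt h₁ (h₀ r - h₁ r / r) r)
    (F G : ℝ → ℂ)
    (hF : Differentiable ℝ F) (hF' : Differentiable ℝ (deriv F))
    (hG : Differentiable ℝ G) (hG' : Differentiable ℝ (deriv G))
    (hFper : Function.Periodic F (2 * Real.pi)) (hGper : Function.Periodic G (2 * Real.pi))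
    (ψ : ℂ → ℂ)
    (hψ : ∀ z : ℂ, ψ z =
      (h₀ (κ * ‖z‖) * F (Complex.arg z) + h₁ (κ * ‖z‖) * G (Complex.arg z)) /
        ((‖z‖ : ℂ)) ^ n) :
    ∀ z : ℂ, z ≠ 0 →
      lapC ψ z + (κ : ℂ) ^ 2 * ψ z =
        2 * (n : ℂ) * (κ : ℂ) *
            (h₁ (κ * ‖z‖) * F (Complex.arg z) -
              h₀ (κ * ‖z‖) * G (Complex.arg z)) / ((‖z‖ : ℂ)) ^ (n + 1) +
          (h₀ (κ * ‖z‖) *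
              (deriv (deriv F) (Complex.arg z) + (n : ℂ) ^ 2 * F (Complex.arg z)) +
            h₁ (κ * ‖z‖) *
              (deriv (deriv G) (Complex.arg z) + ((n : ℂ) + 1) ^ 2 * G (Complex.arg z))) /
            ((‖z‖ : ℂ)) ^ (n + 2) := by
  intro z hz0
  by_cases hz : z ∈ Complex.slitPlane
  · exact karp_aux κ hκ n h₀ h₁ hd₀ hd₁ F G hF hF' hG hG' ψ (fun w _ => hψ w) z hz
  · -- z is on the negative real axis; transfer via the rotation by π
    have him : z.im = 0 ∧ z.re ≤ 0 := by
      rcases not_or.1 (fun h => hz (Complex.mem_slitPlane_iff.2 h)) with ⟨h1, h2⟩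
      exact ⟨not_not.1 h2, not_lt.1 h1⟩
    have hre : z.re < 0 := by
      rcases lt_or_eq_of_le him.2 with h | h
      · exact h
      · exact absurd (Complex.ext (by simpa using h) (by simpa using him.1)) hz0
    have hnegslit : -z ∈ Complex.slitPlane := by
      rw [Complex.mem_slitPlane_iff]
      left
      simpa using hre
    -- shifted angular data
    set F' : ℝ → ℂ := fun θ => F (θ + Real.pi) with hF'def
    set G' : ℝ → ℂ := fun θ => G (θ + Real.pi) with hG'def
    have hF'diff : Differentiable ℝ F' := hF.comp (differentiable_id.add_const _)
    have hG'diff : Differentiable ℝ G' := hG.comp (differentiable_id.add_const _)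
    have hderivF' : deriv F' = fun θ => deriv F (θ + Real.pi) := by
      funext θ; exact deriv_comp_add_const F Real.pi θ
    have hderivG' : deriv G' = fun θ => deriv G (θ + Real.pi) := by
      funext θ; exact deriv_comp_add_const G Real.pi θ
    have hF''diff : Differentiable ℝ (deriv F') := by
      rw [hderivF']; exact hF'.comp (differentiable_id.add_const _)
    have hG''diff : Differentiable ℝ (deriv G') := by
      rw [hderivG']; exact hG'.comp (differentiable_id.add_const _)
    have hF''val : ∀ θ : ℝ, deriv (deriv F') θ = deriv (deriv F) (θ + Real.pi) := by
      intro θ; rw [hderivF']; exact deriv_comp_add_const (deriv F) Real.pi θ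
    have hG''val : ∀ θ : ℝ, deriv (deriv G') θ = deriv (deriv G) (θ + Real.pi) := by
      intro θ; rw [hderivG']; exact deriv_comp_add_const (deriv G) Real.pi θ
    set ψ' : ℂ → ℂ := fun w => ψ (-w) with hψ'def
    have hψ' : ∀ w ∈ Complex.slitPlane, ψ' w =
        (h₀ (κ * ‖w‖) * F' (Complex.arg w) + h₁ (κ * ‖w‖) * G' (Complex.arg w)) /
          ((‖w‖ : ℝ) : ℂ) ^ n := by
      intro w hw
      have h1 : ψ' w = ψ (-w) := rfl
      rw [h1, hψ (-w), norm_neg, periodic_arg_neg hFper hw,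
        periodic_arg_neg hGper hw]
    have hmain := karp_aux κ hκ n h₀ h₁ hd₀ hd₁ F' G' hF'diff hF''diff hG'diff hG''diff
      ψ' hψ' (-z) hnegslit
    -- translate back
    have hψeq : ψ = fun w => ψ' (-w) := by
      funext w
      rw [hψ'def]
      simp
    have hlap : lapC ψ z = lapC ψ' (-z) := by
      rw [hψeq]
      exact lapC_comp_neg ψ' z
    have hψz : ψ' (-z) = ψ z := by rw [hψ'def]; simp
    have hargz : Complex.arg z = Real.pi := Complex.arg_eq_pi_iff.2 ⟨hre, him.1⟩
    have hargnz : Complex.arg (-z) = 0 := by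
      refine Complex.arg_eq_zero_iff.2 ⟨?_, ?_⟩
      · simpa using hre.le
      · simpa using him.1
    have habsz : ‖-z‖ = ‖z‖ := norm_neg z
    rw [hlap, ← hψz, hmain, habsz, hargnz, hargz]
    rw [hF''val 0, hG''val 0]; simp only [hF'def, hG'def, zero_add]
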